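/- Let a : ℤ^d → ℂ be finitely supported with p(z) = Σ_{n∈ℤ^d} a_n z^{−n}, and let V : ℤ^d → ℂ be q-periodic. Set 𝒫̃(z,λ) = det(D^z + B − λI). Then for every m ∈ W, 𝒫̃(μ_m⊙z,λ) = 𝒫̃(z,λ) as Laurent polynomials in z and λ; equivalently, det(D^{μ_m⊙z} + B − λI) = det(D^z + B − λI). -/

import Mathlib

open scoped BigOperators
open Complex

noncomputable section

/-- Laurent polynomials in `z₁,…,z_d` over `ℂ`, encoded as the group algebra of `ℤ^d`. -/
abbrev LMv (d : ℕ) : Type := AddMonoidAlgebra ℂ (Fin d →₀ ℤ)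

/-- Laurent polynomials in `z₁,…,z_d` and `λ` over `ℂ`. -/
abbrev LMvF (d : ℕ) : Type := AddMonoidAlgebra ℂ ((Fin d →₀ ℤ) × ℤ)

/-- `e^{2πin/q}`. -/
def muC (q : ℕ) (n : ℤ) : ℂ := Complex.exp (2 * Real.pi * Complex.I * n / q)

/-- The vector `μ_n = (e^{2πin₁/q₁},…,e^{2πin_d/q_d})`. -/
def muV {d : ℕ} (q : Fin d → ℕ) (n : Fin d → ℤ) : Fin d → ℂ := fun j => muC (q j) (n j)

/-- Substitution `z_j ↦ c_j z_j` in a Laurent polynomial in `z`. -/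
def scaleZ {d : ℕ} (c : Fin d → ℂ) (p : LMv d) : LMv d :=
  AddMonoidAlgebra.ofCoeff (Finsupp.sum (AddMonoidAlgebra.coeff p) fun α a => Finsupp.single α ((∏ j, c j ^ (α j)) * a))

/-- Substitution `z_j ↦ c_j z_j` in a Laurent polynomial in `(z, λ)` (leaving `λ` alone). -/
def scaleZF {d : ℕ} (c : Fin d → ℂ) (P : LMvF d) : LMvF d :=
  AddMonoidAlgebra.ofCoeff (Finsupp.sum (AddMonoidAlgebra.coeff P) fun β a => Finsupp.single β ((∏ j, c j ^ (β.1 j)) * a))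

/-- Total degree `α₁ + ⋯ + α_d` of a monomial exponent. -/
def degS {d : ℕ} (α : Fin d →₀ ℤ) : ℤ := ∑ j, α j

/-- `L₋`, the minimal total degree of a (nonzero) Laurent polynomial. -/
def lowDeg {d : ℕ} (p : LMv d) : ℤ := WithTop.untopD 0 ((Finsupp.support (AddMonoidAlgebra.coeff p)).image degS).min

/-- The lowest degree component of a Laurent polynomial. -/
def lowComp {d : ℕ} (p : LMv d) : LMv d :=
  AddMonoidAlgebra.ofCoeff (Finsupp.filter (fun α => degS α = lowDeg p) (AddMonoidAlgebra.coeff p))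

/-- The fundamental cell `W = {n ∈ ℤ^d : 0 ≤ n_j ≤ q_j - 1}`. -/
def Wcell {d : ℕ} (q : Fin d → ℕ) : Finset (Fin d → ℤ) :=
  Fintype.piFinset fun j => (Finset.range (q j)).image (fun k : ℕ => (k : ℤ))

/-- The canonical embedding of Laurent polynomials in `z` into Laurent polynomials in `(z,λ)`. -/
def embedZ {d : ℕ} (p : LMv d) : LMvF d := AddMonoidAlgebra.ofCoeff (Finsupp.mapDomain (fun α => (α, (0:ℤ))) (AddMonoidAlgebra.coeff p))

/-- The variable `λ`. -/
def lamF (d : ℕ) : LMvF d := AddMonoidAlgebra.ofCoeff (Finsupp.single ((0 : Fin d →₀ ℤ), (1:ℤ)) (1:ℂ))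

/-- Exponent stretching `α ↦ (q₁α₁,…,q_dα_d)`. -/
def stretchE {d : ℕ} (q : Fin d → ℕ) (α : Fin d →₀ ℤ) : Fin d →₀ ℤ :=
  Finsupp.sum α fun j a => Finsupp.single j ((q j : ℤ) * a)

/-- The substitution `𝒫(w,λ) ↦ 𝒫(z₁^{q₁},…,z_d^{q_d},λ)`. -/
def stretchF {d : ℕ} (q : Fin d → ℕ) (P : LMvF d) : LMvF d :=
  AddMonoidAlgebra.ofCoeff (Finsupp.mapDomain (fun β => (stretchE q β.1, β.2)) (AddMonoidAlgebra.coeff P))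

/-- Assumption (A₂): the Laurent polynomials `h(μ_n ⊙ z)`, `n ∈ W`, are pairwise distinct. -/
def PairwiseDistinctH {d : ℕ} (q : Fin d → ℕ) (h : LMv d) : Prop :=
  ∀ n ∈ Wcell q, ∀ n' ∈ Wcell q, n ≠ n' → scaleZ (muV q n) h ≠ scaleZ (muV q n') h

/-- The polynomial `𝒫̃(z,λ) = ∏_{n∈W}(p(μ_n⊙z) − λ) + Σ_{X∈𝒮} C_X ∏_{n∈X}(p(μ_n⊙z) − λ)`. -/
def Ptilde {d : ℕ} (q : Fin d → ℕ) (p : LMv d)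
    (S : Finset (Finset (Fin d → ℤ))) (C : Finset (Fin d → ℤ) → ℂ) : LMvF d :=
  (∏ n ∈ Wcell q, (embedZ (scaleZ (muV q n) p) - lamF d))
    + ∑ X ∈ S, C X • ∏ n ∈ X, (embedZ (scaleZ (muV q n) p) - lamF d)
/-- The symbol `p(z) = Σ_n a_n z^{-n}` of a finite-range Toeplitz operator. -/
def symbA {d : ℕ} (a : (Fin d → ℤ) →₀ ℂ) : LMv d :=
  Finsupp.sum a fun n c => AddMonoidAlgebra.ofCoeff (Finsupp.single (-(Finsupp.equivFunOnFinite.symm n)) c)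

/-- `V` is `q`-periodic. -/
def IsPeriodic {d : ℕ} (q : Fin d → ℕ) (V : (Fin d → ℤ) → ℂ) : Prop :=
  ∀ (n : Fin d → ℤ) (j : Fin d), V (n + (q j : ℤ) • Pi.single j 1) = V n

/-- The discrete Fourier transform `V̂_ℓ = Q^{-1/2} Σ_{m∈W} e^{-2πi⟨m,ℓ⟩} V_m`. -/
def Vhat {d : ℕ} (q : Fin d → ℕ) (V : (Fin d → ℤ) → ℂ) (l : Fin d → ℝ) : ℂ :=
  ((1 / Real.sqrt (∏ j, (q j : ℝ)) : ℝ) : ℂ) *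
    ∑ m ∈ Wcell q, Complex.exp (-(2 * Real.pi * Complex.I) *
      ((∑ j, (m j : ℝ) * l j : ℝ) : ℂ)) * V m

/-- The diagonal matrix `D^z` with entries `p(μ_n ⊙ z)`, as Laurent polynomials. -/
def Dmat {d : ℕ} (q : Fin d → ℕ) (p : LMv d) :
    Matrix {n // n ∈ Wcell q} {n // n ∈ Wcell q} (LMvF d) :=
  Matrix.diagonal fun n => embedZ (scaleZ (muV q n.1) p)

/-- The constant matrix `B` with entries `V̂((n-n')/q)`. -/
def Bmat {d : ℕ} (q : Fin d → ℕ) (V : (Fin d → ℤ) → ℂ) :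
    Matrix {n // n ∈ Wcell q} {n // n ∈ Wcell q} (LMvF d) :=
  fun n n' => AddMonoidAlgebra.ofCoeff (Finsupp.single ((0 : Fin d →₀ ℤ), (0:ℤ))
    (Vhat q V fun j => ((n.1 j - n'.1 j : ℤ) : ℝ) / (q j : ℝ)))

/-- `det(D^z + B - λI)`, a Laurent polynomial in `z` and `λ`. -/
def detLaur {d : ℕ} (q : Fin d → ℕ) (p : LMv d) (V : (Fin d → ℤ) → ℂ) : LMvF d :=
  Matrix.det (Dmat q p + Bmat q V - Matrix.diagonal fun _ => lamF d)
/-- Ordinary polynomials in `z₁,…,z_d` and `λ̃` (the extra `Unit` variable is `λ̃`). -/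
abbrev MvP (d : ℕ) : Type := MvPolynomial (Fin d ⊕ Unit) ℂ

/-- Conversion of a Laurent polynomial in `(z,λ)` with nonnegative exponents into an
ordinary polynomial in `ℂ[z₁,…,z_d,λ̃]` (negative exponents are truncated). -/
def toMvP {d : ℕ} (P : LMvF d) : MvP d :=
  Finsupp.sum (AddMonoidAlgebra.coeff P) fun β c =>
    MvPolynomial.monomial
      (Finsupp.equivFunOnFinite.symm
        (Sum.elim (fun j => (β.1 j).toNat) (fun _ => β.2.toNat))) c

/-- `γ_j(p)`: minus the lowest exponent of `z_j` in `p` if that exponent is negative,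
and `0` otherwise. -/
def gammaV {d : ℕ} (p : LMv d) (j : Fin d) : ℤ :=
  max 0 (-(WithTop.untopD 0 ((Finsupp.support (AddMonoidAlgebra.coeff p)).image fun α => α j).min))

/-- The exponent vector `γ' = (γ₁',…,γ_d')` computed from the lowest degree component of `p`. -/
def gammaE' {d : ℕ} (p : LMv d) : Fin d →₀ ℤ :=
  Finsupp.equivFunOnFinite.symm fun j => gammaV (lowComp p) j

/-- The polynomial `r_n(z,λ̃) = λ̃ z^{γ'} h(μ_n⊙z) − z^{γ'} ∈ ℂ[z,λ̃]`. -/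
def rPoly {d : ℕ} (q : Fin d → ℕ) (p : LMv d) (n : Fin d → ℤ) : MvP d :=
  MvPolynomial.X (Sum.inr ()) *
      toMvP ((AddMonoidAlgebra.single (gammaE' p, (0:ℤ)) (1:ℂ) : LMvF d) * embedZ (scaleZ (muV q n) (lowComp p)))
    - toMvP (AddMonoidAlgebra.ofCoeff (Finsupp.single (gammaE' p, (0:ℤ)) (1:ℂ)))

/-- Substitution `w_j ↦ z_j^{q_j}` (fixing `λ̃`) on ordinary polynomials. -/
def stretchMv {d : ℕ} (q : Fin d → ℕ) : MvP d →ₐ[ℂ] MvP d :=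
  MvPolynomial.aeval
    (Sum.elim (fun j => MvPolynomial.X (Sum.inl j) ^ q j)
      (fun _ => MvPolynomial.X (Sum.inr ())))

/-- Substitution `z_j ↦ c_j z_j` (fixing `λ̃`) on ordinary polynomials. -/
def scaleMv {d : ℕ} (c : Fin d → ℂ) : MvP d →ₐ[ℂ] MvP d :=
  MvPolynomial.aeval
    (Sum.elim (fun j => MvPolynomial.C (c j) * MvPolynomial.X (Sum.inl j))
      (fun _ => MvPolynomial.X (Sum.inr ())))

/-- `ã(z,λ̃) = ∏_{n∈W} r_n(z,λ̃)`. -/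
def atilde {d : ℕ} (q : Fin d → ℕ) (p : LMv d) : MvP d := ∏ n ∈ Wcell q, rPoly q p n

/-- Substitution `λ ↦ λ̃⁻¹` on Laurent polynomials in `(z,λ)`. -/
def invLam {d : ℕ} (P : LMvF d) : LMvF d :=
  AddMonoidAlgebra.ofCoeff (Finsupp.mapDomain (fun β : (Fin d →₀ ℤ) × ℤ => (β.1, -β.2)) (AddMonoidAlgebra.coeff P))

/-- The exponent vector `(γ₁ Q/q₁, …, γ_d Q/q_d)` computed from `p`. -/
def gammaQE {d : ℕ} (q : Fin d → ℕ) (p : LMv d) : Fin d →₀ ℤ :=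
  Finsupp.equivFunOnFinite.symm fun j => gammaV p j * (((∏ i, q i) / q j : ℕ) : ℤ)

/-- `ℛ(w,λ̃) = λ̃^Q w₁^{γ₁Q/q₁}⋯w_d^{γ_dQ/q_d} 𝒫(w,λ̃⁻¹)`. -/
def Rcal {d : ℕ} (q : Fin d → ℕ) (p : LMv d) (P : LMvF d) : LMvF d :=
  (AddMonoidAlgebra.single (gammaQE q p, ((∏ j, q j : ℕ) : ℤ)) (1:ℂ) : LMvF d) * invLam P
/-- Reduction of `v ∈ ℤ^d` modulo the lattice `q₁ℤ ⊕ ⋯ ⊕ q_dℤ` into `W`. -/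
def modW {d : ℕ} (q : Fin d → ℕ) (hq : ∀ j, 1 ≤ q j) (v : Fin d → ℤ) :
    {x // x ∈ Wcell q} :=
  ⟨fun j => v j % (q j : ℤ), by
    simp only [Wcell, Fintype.mem_piFinset, Finset.mem_image, Finset.mem_range]
    intro j
    have h1 : (0:ℤ) < (q j : ℤ) := by exact_mod_cast hq j
    have h2 : v j % (q j : ℤ) < (q j : ℤ) := Int.emod_lt_of_pos _ h1
    have h3 : (0:ℤ) ≤ v j % (q j : ℤ) := Int.emod_nonneg _ (by omega)
    exact ⟨(v j % (q j : ℤ)).toNat, by omega, by omega⟩⟩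

/-- The extension `u^x` of `u : ℂ^W` to `ℤ^d` satisfying `u^x_{n+m⊙q} = e^{2πi⟨m⊙q,x⟩}u_n`. -/
def extFn {d : ℕ} (q : Fin d → ℕ) (hq : ∀ j, 1 ≤ q j) (x : Fin d → ℝ)
    (u : {n // n ∈ Wcell q} → ℂ) (v : Fin d → ℤ) : ℂ :=
  Complex.exp (2 * Real.pi * Complex.I *
      ∑ j, ((((v j / (q j : ℤ)) * (q j : ℤ) : ℤ) : ℂ) * ((x j : ℝ) : ℂ))) *
    u (modW q hq v)

/-- The Floquet restriction `H̃(x)` of `H = A + V` to `ℂ^W`. -/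
def HtildeFn {d : ℕ} (q : Fin d → ℕ) (hq : ∀ j, 1 ≤ q j) (x : Fin d → ℝ)
    (a : (Fin d → ℤ) →₀ ℂ) (V : (Fin d → ℤ) → ℂ)
    (u : {n // n ∈ Wcell q} → ℂ) : {n // n ∈ Wcell q} → ℂ :=
  fun m => (Finsupp.sum a fun k c => c * extFn q hq x u (fun j => m.1 j - k j)) + V m.1 * u m

/-- The matrix of `H̃(x)` in the standard basis of `ℂ^W`. -/
def Hmat {d : ℕ} (q : Fin d → ℕ) (hq : ∀ j, 1 ≤ q j) (x : Fin d → ℝ)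
    (a : (Fin d → ℤ) →₀ ℂ) (V : (Fin d → ℤ) → ℂ) :
    Matrix {n // n ∈ Wcell q} {n // n ∈ Wcell q} ℂ :=
  fun m n => HtildeFn q hq x a V (Pi.single n 1) m

/-- The Floquet–Bloch transform matrix `ℱ^x`. -/
def Fmat {d : ℕ} (q : Fin d → ℕ) (x : Fin d → ℝ) :
    Matrix {n // n ∈ Wcell q} {n // n ∈ Wcell q} ℂ :=
  fun l n => ((1 / Real.sqrt (∏ j, (q j : ℝ)) : ℝ) : ℂ) *
    Complex.exp (-(2 * Real.pi * Complex.I) *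
      ∑ j, ((((l.1 j : ℝ) / (q j : ℝ) + x j : ℝ) : ℂ) * ((n.1 j : ℤ) : ℂ)))

/-- Numerical evaluation of the symbol `p(z) = Σ_n a_n z^{-n}`. -/
def pEvalN {d : ℕ} (a : (Fin d → ℤ) →₀ ℂ) (z : Fin d → ℂ) : ℂ :=
  Finsupp.sum a fun n c => c * ∏ j, z j ^ (-(n j))

/-- The numerical diagonal matrix `D^z`, `z = e^{2πix}`, with entries `p(μ_n ⊙ z)`. -/
def DmatN {d : ℕ} (q : Fin d → ℕ) (x : Fin d → ℝ) (a : (Fin d → ℤ) →₀ ℂ) :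
    Matrix {n // n ∈ Wcell q} {n // n ∈ Wcell q} ℂ :=
  Matrix.diagonal fun n => pEvalN a fun j =>
    muC (q j) (n.1 j) * Complex.exp (2 * Real.pi * Complex.I * ((x j : ℝ) : ℂ))

/-- The numerical matrix `B`. -/
def BmatN {d : ℕ} (q : Fin d → ℕ) (V : (Fin d → ℤ) → ℂ) :
    Matrix {n // n ∈ Wcell q} {n // n ∈ Wcell q} ℂ :=
  fun n n' => Vhat q V fun j => ((n.1 j - n'.1 j : ℤ) : ℝ) / (q j : ℝ)

/-- The symbol of the discrete Laplacian: `p(z) = -(Σ_j z_j + z_j⁻¹)`. -/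
def pLap (d : ℕ) : LMv d :=
  - ∑ j : Fin d, ((AddMonoidAlgebra.single (Finsupp.single j (1:ℤ)) (1:ℂ) : LMv d)
      + (AddMonoidAlgebra.single (Finsupp.single j (-1:ℤ)) (1:ℂ) : LMv d))

/-- The exponent vector `(a, b) ∈ ℤ²`. -/
def ee2 (a b : ℤ) : Fin 2 →₀ ℤ := Finsupp.single 0 a + Finsupp.single 1 b

/-- The monomial `z₁^a z₂^b`. -/
def mono2 (a b : ℤ) : LMv 2 := AddMonoidAlgebra.single (ee2 a b) (1:ℂ)

/-- The symbol of the extended Harper lattice Laplacian. -/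
def pEHM : LMv 2 :=
  -(mono2 1 0 + mono2 (-1) 0 + mono2 0 1 + mono2 0 (-1)
    + mono2 1 (-1) + mono2 (-1) 1 + mono2 1 1 + mono2 (-1) (-1))

/-- The symbol of the (sheared) triangular lattice Laplacian. -/
def pTri : LMv 2 :=
  -(mono2 1 0 + mono2 (-1) 0 + mono2 0 1 + mono2 0 (-1) + mono2 1 (-1) + mono2 (-1) 1)

namespace MyAux
variable {d : ℕ}

lemma scaleZF_single (c : Fin d → ℂ) (β : (Fin d →₀ ℤ) × ℤ) (a : ℂ) :
    scaleZF c (AddMonoidAlgebra.single β a) = AddMonoidAlgebra.single β ((∏ j, c j ^ (β.1 j)) * a) := by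
  unfold scaleZF
  rw [AddMonoidAlgebra.coeff_single, Finsupp.sum_single_index]
  · rfl
  · simp

lemma scaleZF_add (c : Fin d → ℂ) (P Q : LMvF d) :
    scaleZF c (P + Q) = scaleZF c P + scaleZF c Q := by
  unfold scaleZF
  rw [AddMonoidAlgebra.coeff_add, Finsupp.sum_add_index' (fun b => by simp) (fun b x y => by rw [mul_add, Finsupp.single_add]), AddMonoidAlgebra.ofCoeff_add]

lemma scaleZ_single (c : Fin d → ℂ) (α : Fin d →₀ ℤ) (a : ℂ) :
    scaleZ c (AddMonoidAlgebra.single α a) = AddMonoidAlgebra.single α ((∏ j, c j ^ (α j)) * a) := by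
  unfold scaleZ
  rw [AddMonoidAlgebra.coeff_single, Finsupp.sum_single_index]
  · rfl
  · simp

lemma scaleZ_add (c : Fin d → ℂ) (P Q : LMv d) :
    scaleZ c (P + Q) = scaleZ c P + scaleZ c Q := by
  unfold scaleZ
  rw [AddMonoidAlgebra.coeff_add, Finsupp.sum_add_index' (fun b => by simp) (fun b x y => by rw [mul_add, Finsupp.single_add]), AddMonoidAlgebra.ofCoeff_add]

lemma scaleZ_scaleZ (c c' : Fin d → ℂ) (p : LMv d) :
    scaleZ c (scaleZ c' p) = scaleZ (fun j => c j * c' j) p := by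
  induction p using AddMonoidAlgebra.induction_linear with
  | zero => simp [scaleZ]
  | add f g hf hg => rw [scaleZ_add, scaleZ_add, scaleZ_add, hf, hg]
  | single α a =>
      rw [scaleZ_single, scaleZ_single, scaleZ_single]
      congr 1
      simp only [mul_zpow, Finset.prod_mul_distrib]
      ring

def scaleHom (c : Fin d → ℂ) (hc : ∀ j, c j ≠ 0) : LMvF d →ₐ[ℂ] LMvF d :=
  AddMonoidAlgebra.lift ℂ (LMvF d) ((Fin d →₀ ℤ) × ℤ)
    { toFun := fun g => AddMonoidAlgebra.single (Multiplicative.toAdd g)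
        (∏ j, c j ^ ((Multiplicative.toAdd g).1 j)),
      map_one' := by simp [AddMonoidAlgebra.one_def],
      map_mul' := by
        intro g h
        rw [toAdd_mul]
        rw [show (∏ j, c j ^ ((Multiplicative.toAdd g + Multiplicative.toAdd h).1 j)) =
            (∏ j, c j ^ ((Multiplicative.toAdd g).1 j)) *
              ∏ j, c j ^ ((Multiplicative.toAdd h).1 j) from by
          rw [← Finset.prod_mul_distrib]
          refine Finset.prod_congr rfl fun j _ => ?_
          rw [Prod.fst_add, Finsupp.add_apply, zpow_add₀ (hc j)]]
        exact (AddMonoidAlgebra.single_mul_single _ _ _ _).symm }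

lemma scaleZF_eq (c : Fin d → ℂ) (hc : ∀ j, c j ≠ 0) (P : LMvF d) :
    scaleZF c P = scaleHom c hc P := by
  induction P using AddMonoidAlgebra.induction_linear with
  | zero => simp [scaleZF]
  | add f g hf hg => rw [scaleZF_add, map_add, hf, hg]
  | single β a =>
      rw [scaleZF_single, scaleHom, AddMonoidAlgebra.lift_single]
      simp only [MonoidHom.coe_mk, OneHom.coe_mk, toAdd_ofAdd]
      rw [AddMonoidAlgebra.smul_single, smul_eq_mul, mul_comm]


variable {d : ℕ}

lemma muC_ne_zero (q : ℕ) (n : ℤ) : muC q n ≠ 0 := Complex.exp_ne_zero _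

lemma muC_mul (q : ℕ) (a b : ℤ) : muC q a * muC q b = muC q (a + b) := by
  unfold muC
  rw [← Complex.exp_add]
  congr 1
  push_cast
  ring

lemma muC_period (q : ℕ) (hq : 1 ≤ q) (a k : ℤ) : muC q (a + k * q) = muC q a := by
  rw [← muC_mul]
  have hq0 : (q : ℂ) ≠ 0 := Nat.cast_ne_zero.mpr (by omega)
  have : muC q (k * q) = 1 := by
    unfold muC
    rw [show (2 * (Real.pi:ℂ) * Complex.I * ((k * q : ℤ):ℂ) / (q:ℂ)) =
        (k:ℂ) * (2 * (Real.pi:ℂ) * Complex.I) from by push_cast; field_simp]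
    exact Complex.exp_int_mul_two_pi_mul_I k
  rw [this, mul_one]

lemma muC_emod (q : ℕ) (hq : 1 ≤ q) (a : ℤ) : muC q (a % q) = muC q a := by
  conv_rhs => rw [← Int.emod_add_ediv_mul a (q:ℤ)]
  rw [muC_period q hq]

lemma mem_Wcell_iff (q : Fin d → ℕ) (n : Fin d → ℤ) :
    n ∈ Wcell q ↔ ∀ j, 0 ≤ n j ∧ n j < q j := by
  simp only [Wcell, Fintype.mem_piFinset, Finset.mem_image, Finset.mem_range]
  constructor
  · intro h j
    obtain ⟨k, hk, hkn⟩ := h j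
    omega
  · intro h j
    obtain ⟨h1, h2⟩ := h j
    exact ⟨(n j).toNat, by omega, by omega⟩


variable {d : ℕ}

lemma modW_congr (q : Fin d → ℕ) (hq : ∀ j, 1 ≤ q j) {v w : Fin d → ℤ}
    (h : ∀ j, v j % (q j : ℤ) = w j % (q j : ℤ)) : modW q hq v = modW q hq w :=
  Subtype.ext (funext fun j => h j)

lemma modW_self (q : Fin d → ℕ) (hq : ∀ j, 1 ≤ q j) (n : Fin d → ℤ) (hn : n ∈ Wcell q) :
    modW q hq n = ⟨n, hn⟩ := by
  apply Subtype.ext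
  funext j
  obtain ⟨h1, h2⟩ := (mem_Wcell_iff q n).mp hn j
  exact Int.emod_eq_of_lt h1 h2

lemma emod_shift (x y : ℤ) (c : ℤ) : (x % c + y) % c = (x + y) % c := by
  rw [Int.add_emod, Int.emod_emod_of_dvd _ dvd_rfl, ← Int.add_emod]

def shiftEquiv (q : Fin d → ℕ) (hq : ∀ j, 1 ≤ q j) (m : Fin d → ℤ) :
    {x // x ∈ Wcell q} ≃ {x // x ∈ Wcell q} where
  toFun n := modW q hq (fun j => n.1 j + m j)
  invFun n := modW q hq (fun j => n.1 j - m j)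
  left_inv n := by
    have h : ∀ j, ((fun j => (modW q hq (fun j => n.1 j + m j)).1 j - m j) j) % (q j : ℤ)
        = n.1 j % (q j : ℤ) := by
      intro j
      show ((n.1 j + m j) % (q j : ℤ) - m j) % (q j : ℤ) = n.1 j % (q j : ℤ)
      rw [sub_eq_add_neg, emod_shift, ← sub_eq_add_neg, add_sub_cancel_right]
    show modW q hq _ = n
    rw [modW_congr q hq h, modW_self q hq n.1 n.2]
  right_inv n := by
    have h : ∀ j, ((fun j => (modW q hq (fun j => n.1 j - m j)).1 j + m j) j) % (q j : ℤ)
        = n.1 j % (q j : ℤ) := by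
      intro j
      show ((n.1 j - m j) % (q j : ℤ) + m j) % (q j : ℤ) = n.1 j % (q j : ℤ)
      rw [emod_shift, sub_add_cancel]
    show modW q hq _ = n
    rw [modW_congr q hq h, modW_self q hq n.1 n.2]

lemma muV_modW (q : Fin d → ℕ) (hq : ∀ j, 1 ≤ q j) (v : Fin d → ℤ) :
    muV q (modW q hq v).1 = muV q v := by
  funext j
  exact muC_emod (q j) (hq j) (v j)

lemma muV_mul (q : Fin d → ℕ) (m n : Fin d → ℤ) :
    (fun j => muV q m j * muV q n j) = muV q (fun j => m j + n j) := by
  funext j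
  exact muC_mul (q j) (m j) (n j)


variable {d : ℕ}

lemma Vhat_shift (q : Fin d → ℕ) (hq : ∀ j, 1 ≤ q j) (V : (Fin d → ℤ) → ℂ) (v k : Fin d → ℤ) :
    Vhat q V (fun j => ((v j + k j * (q j : ℤ) : ℤ) : ℝ) / (q j : ℝ)) =
    Vhat q V (fun j => ((v j : ℤ) : ℝ) / (q j : ℝ)) := by
  unfold Vhat
  congr 1
  refine Finset.sum_congr rfl fun w hw => ?_
  congr 1
  have hsum : (∑ j, (w j : ℝ) * (((v j + k j * (q j : ℤ) : ℤ) : ℝ) / (q j : ℝ)))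
      = (∑ j, (w j : ℝ) * (((v j : ℤ) : ℝ) / (q j : ℝ))) + ((∑ j, w j * k j : ℤ) : ℝ) := by
    push_cast
    rw [← Finset.sum_add_distrib]
    refine Finset.sum_congr rfl fun j _ => ?_
    have hqj : ((q j : ℝ)) ≠ 0 := Nat.cast_ne_zero.mpr (by have := hq j; omega)
    field_simp
  rw [hsum]
  push_cast
  rw [mul_add, Complex.exp_add]
  have h1 : Complex.exp (-(2 * (Real.pi : ℂ) * Complex.I) * (∑ j, (w j : ℂ) * (k j : ℂ))) = 1 := by
    rw [show -(2 * (Real.pi : ℂ) * Complex.I) * (∑ j, (w j : ℂ) * (k j : ℂ))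
        = ((-(∑ j, w j * k j) : ℤ) : ℂ) * (2 * Real.pi * Complex.I) from by push_cast; ring]
    exact Complex.exp_int_mul_two_pi_mul_I _
  rw [h1, mul_one]

lemma Vhat_shiftEquiv (q : Fin d → ℕ) (hq : ∀ j, 1 ≤ q j) (V : (Fin d → ℤ) → ℂ)
    (m : Fin d → ℤ) (n n' : {x // x ∈ Wcell q}) :
    (Vhat q V fun j => (((shiftEquiv q hq m n).1 j - (shiftEquiv q hq m n').1 j : ℤ) : ℝ) / (q j : ℝ))
    = Vhat q V fun j => ((n.1 j - n'.1 j : ℤ) : ℝ) / (q j : ℝ) := by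
  set X : Fin d → ℤ := fun j => (shiftEquiv q hq m n).1 j - (shiftEquiv q hq m n').1 j with hX
  set Y : Fin d → ℤ := fun j => n.1 j - n'.1 j with hY
  have hdvd : ∀ j, (q j : ℤ) ∣ (X j - Y j) := by
    intro j
    apply Int.dvd_of_emod_eq_zero
    have hXq : X j % (q j : ℤ) = Y j % (q j : ℤ) := by
      show ((n.1 j + m j) % (q j : ℤ) - (n'.1 j + m j) % (q j : ℤ)) % (q j : ℤ) = _
      rw [← Int.sub_emod]
      congr 1
      ring
    rw [Int.sub_emod, hXq, sub_self, Int.zero_emod]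
  have hX' : ∀ j, X j = Y j + ((X j - Y j) / (q j : ℤ)) * (q j : ℤ) := by
    intro j
    rw [Int.ediv_mul_cancel (hdvd j)]
    ring
  rw [show (fun j => ((X j : ℤ) : ℝ) / (q j : ℝ))
      = fun j => ((Y j + ((X j - Y j) / (q j : ℤ)) * (q j : ℤ) : ℤ) : ℝ) / (q j : ℝ) from by
    funext j; rw [← hX' j]]
  exact Vhat_shift q hq V Y fun j => (X j - Y j) / (q j : ℤ)


variable {d : ℕ}

lemma scaleZF_embedZ (c : Fin d → ℂ) (p : LMv d) :
    scaleZF c (embedZ p) = embedZ (scaleZ c p) := by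
  induction p using AddMonoidAlgebra.induction_linear with
  | zero => simp [embedZ, scaleZF, scaleZ]
  | add f g hf hg =>
      have hE : ∀ x y : LMv d, embedZ (x + y) = embedZ x + embedZ y := fun x y => by
        simp only [embedZ, AddMonoidAlgebra.coeff_add, Finsupp.mapDomain_add,
          AddMonoidAlgebra.ofCoeff_add]
      rw [hE, scaleZF_add, scaleZ_add, hf, hg, hE]
  | single α a =>
      rw [embedZ, AddMonoidAlgebra.coeff_single, Finsupp.mapDomain_single,
        AddMonoidAlgebra.ofCoeff_single, scaleZF_single, scaleZ_single, embedZ,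
        AddMonoidAlgebra.coeff_single, Finsupp.mapDomain_single, AddMonoidAlgebra.ofCoeff_single]

lemma scaleZF_lamF (c : Fin d → ℂ) : scaleZF c (lamF d) = lamF d := by
  rw [lamF, AddMonoidAlgebra.ofCoeff_single, scaleZF_single]
  norm_num

lemma scaleZF_constB (c : Fin d → ℂ) (v : ℂ) :
    scaleZF c (AddMonoidAlgebra.ofCoeff (Finsupp.single ((0 : Fin d →₀ ℤ), (0:ℤ)) v))
      = AddMonoidAlgebra.ofCoeff (Finsupp.single ((0 : Fin d →₀ ℤ), (0:ℤ)) v) := by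
  rw [AddMonoidAlgebra.ofCoeff_single, scaleZF_single]
  norm_num

lemma muV_ne_zero (q : Fin d → ℕ) (m : Fin d → ℤ) (j : Fin d) : muV q m j ≠ 0 :=
  Complex.exp_ne_zero _

set_option maxHeartbeats 2000000 in
theorem main (q : Fin d → ℕ) (hq : ∀ j, 1 ≤ q j) (p : LMv d) (V : (Fin d → ℤ) → ℂ)
    (m : Fin d → ℤ) (hm : m ∈ Wcell q) :
    scaleZF (muV q m) (detLaur q p V) = detLaur q p V ∧
      Matrix.det
          ((Matrix.diagonal fun n : {x // x ∈ Wcell q} =>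
              embedZ (scaleZ (muV q m) (scaleZ (muV q n.1) p)))
            + Bmat q V - Matrix.diagonal fun _ => lamF d)
        = detLaur q p V := by
  classical
  set c : Fin d → ℂ := muV q m with hc'
  have hc : ∀ j, c j ≠ 0 := muV_ne_zero q m
  set M : Matrix {x // x ∈ Wcell q} {x // x ∈ Wcell q} (LMvF d) :=
    Dmat q p + Bmat q V - Matrix.diagonal fun _ => lamF d with hM
  set M' : Matrix {x // x ∈ Wcell q} {x // x ∈ Wcell q} (LMvF d) :=
    (Matrix.diagonal fun n : {x // x ∈ Wcell q} =>
        embedZ (scaleZ (muV q m) (scaleZ (muV q n.1) p)))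
      + Bmat q V - Matrix.diagonal fun _ => lamF d with hM'
  set e : {x // x ∈ Wcell q} ≃ {x // x ∈ Wcell q} := shiftEquiv q hq m with he
  have hmap : M.map (scaleZF c) = M' := by
    ext i j
    simp only [hM, hM', Matrix.map_apply, Matrix.sub_apply, Matrix.add_apply,
      Dmat, Bmat, Matrix.diagonal_apply]
    rw [scaleZF_eq c hc, map_sub, map_add, ← scaleZF_eq c hc, ← scaleZF_eq c hc,
      ← scaleZF_eq c hc]
    rw [apply_ite (scaleZF c), apply_ite (scaleZF c)]
    rw [scaleZF_embedZ, scaleZF_lamF, scaleZF_constB]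
    have h0 : scaleZF c (0 : LMvF d) = 0 := by simp [scaleZF]
    rw [h0]
  have hBB : ∀ i j : {x // x ∈ Wcell q},
      (Vhat q V fun k => (((e i).1 k - (e j).1 k : ℤ) : ℝ) / (q k : ℝ))
        = Vhat q V fun k => ((i.1 k - j.1 k : ℤ) : ℝ) / (q k : ℝ) :=
    fun i j => Vhat_shiftEquiv q hq V m i j
  have hDD : ∀ i : {x // x ∈ Wcell q},
      scaleZ (muV q m) (scaleZ (muV q i.1) p) = scaleZ (muV q (e i).1) p := by
    intro i
    rw [scaleZ_scaleZ, muV_mul]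
    congr 1
    rw [he, show (shiftEquiv q hq m i).1 = (modW q hq (fun k => i.1 k + m k)).1 from rfl,
      muV_modW]
    funext k
    show muC (q k) (m k + i.1 k) = muC (q k) (i.1 k + m k)
    rw [add_comm]
  have hsub : M' = M.submatrix e e := by
    apply Matrix.ext; intro i j
    simp only [hM, hM', Matrix.submatrix_apply, Matrix.sub_apply, Matrix.add_apply,
      Dmat, Bmat, Matrix.diagonal_apply, EmbeddingLike.apply_eq_iff_eq]
    rw [hBB i j, hDD i]
  have hdet2 : M'.det = detLaur q p V := by
    rw [hsub, Matrix.det_submatrix_equiv_self]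
    rw [detLaur]
  refine ⟨?_, hdet2⟩
  have hstep : scaleZF c (detLaur q p V) = (M.map (scaleZF c)).det := by
    rw [detLaur, ← hM]
    calc scaleZF c M.det = (scaleHom c hc) M.det := scaleZF_eq c hc _
      _ = ((scaleHom c hc : LMvF d →+* LMvF d)) M.det := rfl
      _ = (((scaleHom c hc : LMvF d →+* LMvF d)).mapMatrix M).det := RingHom.map_det _ M
      _ = (M.map (scaleZF c)).det := by
          congr 1
          apply Matrix.ext; intro i j
          simp only [RingHom.mapMatrix_apply, Matrix.map_apply, RingHom.coe_coe]
          rw [scaleZF_eq c hc]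
  rw [hstep, hmap, hdet2]

end MyAux

theorem stmt12 {d : ℕ} (hd : 1 ≤ d) (q : Fin d → ℕ) (hq : ∀ j, 1 ≤ q j)
    (a : (Fin d → ℤ) →₀ ℂ) (V : (Fin d → ℤ) → ℂ) (hV : IsPeriodic q V) :
    ∀ m ∈ Wcell q,
      scaleZF (muV q m) (detLaur q (symbA a) V) = detLaur q (symbA a) V ∧
      Matrix.det
          ((Matrix.diagonal fun n : {x // x ∈ Wcell q} =>
              embedZ (scaleZ (muV q m) (scaleZ (muV q n.1) (symbA a))))
            + Bmat q V - Matrix.diagonal fun _ => lamF d)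
        = detLaur q (symbA a) V := by
  intro m hm
  exact MyAux.main q hq (symbA a) V m hm
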